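/- Let $R$ be a commutative ring and $A$ a unital $R$-algebra that can be generated by $m$ elements as an $R$-module. Elements $a_1,\dots,a_k$ generate $A$ as an $R$-algebra if and only if the non-commutative monomials in $a_1,\dots,a_k$ of degree less than $m$ generate $A$ as an $R$-module. -/

import Mathlib

open Submodule

private def wS {A : Type*} [Monoid A] (T : Set A) (n : ℕ) : Set A :=
  {x | ∃ l : List A, l.length < n ∧ (∀ y ∈ l, y ∈ T) ∧ l.prod = x}

private lemma wS_mono {A : Type*} [Monoid A] (T : Set A) {n n' : ℕ} (h : n ≤ n') :
    wS T n ⊆ wS T n' := by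
  rintro x ⟨l, hl, hm, rfl⟩
  exact ⟨l, lt_of_lt_of_le hl h, hm, rfl⟩

private lemma wS_step {R A : Type*} [CommRing R] [Ring A] [Algebra R A] (T : Set A) (n : ℕ) :
    span R (wS T (n + 1)) = span R (wS T 1) ⊔ span R T * span R (wS T n) := by
  apply le_antisymm
  · apply span_le.2
    rintro x ⟨l, hl, hm, rfl⟩
    cases l with
    | nil =>
      exact Submodule.mem_sup_left (subset_span ⟨[], Nat.zero_lt_one, by simp, rfl⟩)
    | cons y t =>
      have ht : t.length < n := by simpa using hl
      refine Submodule.mem_sup_right ?_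
      rw [List.prod_cons]
      exact Submodule.mul_mem_mul (subset_span (hm y (List.mem_cons_self)))
        (subset_span ⟨t, ht, fun z hz => hm z (List.mem_cons_of_mem _ hz), rfl⟩)
  · refine sup_le (span_mono (wS_mono T (by omega))) ?_
    rw [span_mul_span]
    apply span_le.2
    rintro z hz
    rw [Set.mem_mul] at hz
    obtain ⟨y, hy, x, ⟨l, hl, hm, rfl⟩, rfl⟩ := hz
    exact subset_span ⟨y :: l, by simpa using hl, by
      intro w hw
      rcases List.mem_cons.1 hw with h | h
      · exact h ▸ hy
      · exact hm w h, by simp⟩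

private lemma wS_closure {A : Type*} [Monoid A] (T : Set A) {x : A}
    (hx : x ∈ Submonoid.closure T) : ∃ n, x ∈ wS T n := by
  obtain ⟨l, hm, rfl⟩ := Submonoid.exists_list_of_mem_closure hx
  exact ⟨l.length + 1, l, Nat.lt_succ_self _, hm, rfl⟩

private lemma aux_field_chain {k B : Type*} [Field k] [AddCommGroup B] [Module k B]
    [FiniteDimensional k B] {m : ℕ} (hrank : Module.finrank k B ≤ m)
    (N : ℕ → Submodule k B) (hmono : Monotone N)
    (hstab : ∀ i, N (i + 1) = N i → ∀ j, N (i + j) = N i)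
    (hsup : ∀ x : B, ∃ n, x ∈ N n) : N m = ⊤ := by
  by_cases h : ∀ i < m, N i < N (i + 1)
  · have key : ∀ i ≤ m, i ≤ Module.finrank k (N i) := by
      intro i hi
      induction i with
      | zero => exact Nat.zero_le _
      | succ n ih =>
        have hn : n < m := hi
        have h1 := Submodule.finrank_lt_finrank_of_lt (h n hn)
        have h2 := ih (Nat.le_of_succ_le hi)
        omega
    have hle : Module.finrank k (N m) = Module.finrank k B :=
      le_antisymm (Submodule.finrank_le _) (hrank.trans (key m le_rfl))
    exact Submodule.eq_top_of_finrank_eq hle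
  · push_neg at h
    obtain ⟨i, him, hi⟩ := h
    have heq : N (i + 1) = N i :=
      le_antisymm (by
        rcases lt_or_eq_of_le (hmono (Nat.le_succ i)) with h' | h'
        · exact absurd h' hi
        · exact le_of_eq h'.symm) (hmono (Nat.le_succ i))
    have htop : N i = ⊤ := by
      rw [eq_top_iff]
      intro x _
      obtain ⟨n, hn⟩ := hsup x
      rcases le_or_gt n i with h' | h'
      · exact hmono h' hn
      · have := hstab i heq (n - i)
        rw [Nat.add_sub_cancel' h'.le] at this
        rw [← this]; exact hn
    exact eq_top_iff.2 (htop ▸ hmono him.le)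

theorem stmt_7 {R A : Type*} [CommRing R] [Ring A] [Algebra R A]
    {m : ℕ} (s : Finset A) (hs : s.card = m) (hspan : Submodule.span R (s : Set A) = ⊤)
    {k : ℕ} (a : Fin k → A) :
    Algebra.adjoin R (Set.range a) = ⊤ ↔
      Submodule.span R
        {x : A | ∃ l : List A, l.length < m ∧ (∀ y ∈ l, y ∈ Set.range a) ∧ l.prod = x} = ⊤ := by
  classical
  constructor
  · intro hadj
    show span R (wS (Set.range a) m) = ⊤
    by_contra hM
    set T : Set A := Set.range a with hT
    set M : ℕ → Submodule R A := fun n => span R (wS T n) with hMdef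
    -- find a coatom above M m
    have hfg : (⊤ : Submodule R A).FG := ⟨s, hspan⟩
    haveI : IsCoatomic (Submodule R A) :=
      CompleteLattice.coatomic_of_top_compact ((Submodule.fg_iff_compact _).mp hfg)
    obtain ⟨P, hP, hMP⟩ := (eq_top_or_exists_le_coatom (M m)).resolve_left hM
    haveI hsimple : IsSimpleModule R (A ⧸ P) := (isSimpleModule_iff_isCoatom).mpr hP
    set 𝔪 : Ideal R := Module.annihilator R (A ⧸ P) with h𝔪def
    haveI h𝔪 : 𝔪.IsMaximal := IsSimpleModule.annihilator_isMaximal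
    have hJP : 𝔪 • (⊤ : Submodule R A) ≤ P := by
      refine Submodule.smul_le.2 fun c hc x _ => ?_
      have h0 : c • (Submodule.Quotient.mk x : A ⧸ P) = 0 := Module.mem_annihilator.mp hc _
      rwa [← Submodule.Quotient.mk_smul, Submodule.Quotient.mk_eq_zero] at h0
    have hWJ : span R T * (𝔪 • (⊤ : Submodule R A)) ≤ 𝔪 • (⊤ : Submodule R A) := by
      rw [Submodule.mul_le]
      intro w hw x hx
      refine Submodule.smul_induction_on hx ?_ ?_
      · intro c hc y _
        rw [mul_smul_comm]
        exact Submodule.smul_mem_smul hc trivial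
      · intro y z hy hz
        rw [mul_add]; exact add_mem hy hz
    let π : A →ₗ[R] A ⧸ 𝔪 • (⊤ : Submodule R A) := (𝔪 • (⊤ : Submodule R A)).mkQ
    set N : ℕ → Submodule (R ⧸ 𝔪) (A ⧸ 𝔪 • (⊤ : Submodule R A)) :=
      fun n => span (R ⧸ 𝔪) (π '' wS T n) with hNdef
    have hres : ∀ n, restrictScalars R (N n) = Submodule.map π (M n) := by
      intro n
      rw [hNdef, hMdef, Submodule.map_span,
        Submodule.restrictScalars_span R (R ⧸ 𝔪) Ideal.Quotient.mk_surjective]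
    have hresinj := Submodule.restrictScalars_injective R (R ⧸ 𝔪)
        (A ⧸ 𝔪 • (⊤ : Submodule R A))
    have hmono : Monotone N := fun n n' h => span_mono (Set.image_mono (wS_mono T h))
    have hsup : ∀ x : A ⧸ 𝔪 • (⊤ : Submodule R A), ∃ n, x ∈ N n := by
      intro x
      obtain ⟨y, rfl⟩ := Submodule.mkQ_surjective _ x
      have hy : y ∈ span R (Submonoid.closure T : Set A) := by
        rw [← Algebra.adjoin_eq_span, hT, hadj]; trivial
      refine Submodule.span_induction ?_ ?_ ?_ ?_ hy
      · intro z hz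
        obtain ⟨n, hn⟩ := wS_closure T hz
        exact ⟨n, subset_span (Set.mem_image_of_mem _ hn)⟩
      · exact ⟨0, by simp⟩
      · rintro y z - - ⟨n1, h1⟩ ⟨n2, h2⟩
        exact ⟨max n1 n2, by
          rw [map_add]
          exact add_mem (hmono (le_max_left _ _) h1) (hmono (le_max_right _ _) h2)⟩
      · rintro r z - ⟨n, hn⟩
        refine ⟨n, ?_⟩
        have hsm : π (r • z) = (Ideal.Quotient.mk 𝔪 r) • π z := by
          rw [map_smul]; rfl
        rw [hsm]
        exact (N n).smul_mem _ hn
    -- stabilization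
    have hMstep : ∀ n, M (n + 1) ≤ M n ⊔ 𝔪 • (⊤ : Submodule R A) →
        M (n + 2) ≤ M (n + 1) ⊔ 𝔪 • (⊤ : Submodule R A) := by
      intro n hn
      have e1 : M (n + 2) = M 1 ⊔ span R T * M (n + 1) := wS_step T (n + 1)
      have e0 : M (n + 1) = M 1 ⊔ span R T * M n := wS_step T n
      rw [e1]
      refine sup_le (le_sup_of_le_left (by rw [e0]; exact le_sup_left)) ?_
      calc span R T * M (n + 1)
          ≤ span R T * (M n ⊔ 𝔪 • (⊤ : Submodule R A)) := mul_le_mul' le_rfl hn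
        _ = span R T * M n ⊔ span R T * (𝔪 • (⊤ : Submodule R A)) := Submodule.mul_sup _ _ _
        _ ≤ M (n + 1) ⊔ 𝔪 • (⊤ : Submodule R A) := by
            refine sup_le (le_sup_of_le_left ?_) (le_sup_of_le_right hWJ)
            rw [e0]; exact le_sup_right
    have hstab : ∀ i, N (i + 1) = N i → ∀ j, N (i + j) = N i := by
      intro i hi j
      have hMi : M (i + 1) ⊔ 𝔪 • (⊤ : Submodule R A) = M i ⊔ 𝔪 • (⊤ : Submodule R A) := by
        have h1 : Submodule.map π (M (i + 1)) = Submodule.map π (M i) := by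
          rw [← hres, ← hres, hi]
        have h2 := congrArg (Submodule.comap π) h1
        rwa [Submodule.comap_map_mkQ, Submodule.comap_map_mkQ, sup_comm _ (M (i+1)),
          sup_comm _ (M i)] at h2
      have hle' : ∀ n, M (i + n + 1) ≤ M (i + n) ⊔ 𝔪 • (⊤ : Submodule R A) := by
        intro n
        induction n with
        | zero => exact hMi.le.trans' le_sup_left
        | succ p ihp => exact hMstep (i + p) ihp
      have hchain : ∀ j, M (i + j) ⊔ 𝔪 • (⊤ : Submodule R A) = M i ⊔ 𝔪 • (⊤ : Submodule R A) := by
        intro j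
        induction j with
        | zero => rfl
        | succ n ih =>
          have hle : M (i + n + 1) ≤ M (i + n) ⊔ 𝔪 • (⊤ : Submodule R A) := hle' n
          have : M (i + n + 1) ⊔ 𝔪 • (⊤ : Submodule R A) = M (i + n) ⊔ 𝔪 • (⊤ : Submodule R A) :=
            le_antisymm (sup_le hle le_sup_right)
              (sup_le (le_sup_of_le_left (span_mono (wS_mono T (Nat.le_succ _)))) le_sup_right)
          rw [show i + (n + 1) = i + n + 1 from rfl, this, ih]
      apply hresinj
      rw [hres, hres]
      have hmapJ : Submodule.map π (𝔪 • (⊤ : Submodule R A)) = ⊥ := by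
        rw [eq_bot_iff, Submodule.map_le_iff_le_comap, Submodule.comap_bot, Submodule.ker_mkQ]
      have e : ∀ n : ℕ, Submodule.map π (M n) =
          Submodule.map π (M n ⊔ 𝔪 • (⊤ : Submodule R A)) := by
        intro n; rw [Submodule.map_sup, hmapJ, sup_bot_eq]
      rw [e (i + j), e i, hchain j]
    -- finite dimensionality of the quotient
    have htspan : span (R ⧸ 𝔪) ((s.image (fun x => π x) : Finset _) :
        Set (A ⧸ 𝔪 • (⊤ : Submodule R A))) = ⊤ := by
      have h1 : Submodule.map π (span R (s : Set A)) = ⊤ := by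
        rw [hspan, Submodule.map_top, Submodule.range_mkQ]
      rw [Submodule.map_span] at h1
      apply hresinj
      rw [Finset.coe_image,
        Submodule.restrictScalars_span R (R ⧸ 𝔪) Ideal.Quotient.mk_surjective,
        Submodule.restrictScalars_top, h1]
    haveI : Module.Finite (R ⧸ 𝔪) (A ⧸ 𝔪 • (⊤ : Submodule R A)) := ⟨⟨_, htspan⟩⟩
    haveI : Nontrivial (R ⧸ 𝔪) := Ideal.Quotient.nontrivial_iff.mpr h𝔪.ne_top
    have hrank : Module.finrank (R ⧸ 𝔪) (A ⧸ 𝔪 • (⊤ : Submodule R A)) ≤ m := by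
      have h1 := finrank_span_finset_le_card (R := R ⧸ 𝔪) (s.image (fun x => π x))
      unfold Set.finrank at h1
      rw [htspan, finrank_top] at h1
      exact h1.trans (le_trans Finset.card_image_le hs.le)
    have hNm : N m = ⊤ :=
      @aux_field_chain (R ⧸ 𝔪) _ (Ideal.Quotient.field 𝔪) _ _ ‹_› m hrank N hmono hstab hsup
    have hmaptop : Submodule.map π (M m) = ⊤ := by
      rw [← hres, hNm, Submodule.restrictScalars_top]
    rw [Submodule.map_mkQ_eq_top] at hmaptop
    exact hP.1 (top_le_iff.1 (hmaptop ▸ sup_le hJP hMP))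
  · intro h
    have hle : span R {x : A | ∃ l : List A, l.length < m ∧
        (∀ y ∈ l, y ∈ Set.range a) ∧ l.prod = x} ≤
        Subalgebra.toSubmodule (Algebra.adjoin R (Set.range a)) := by
      apply span_le.2
      rintro x ⟨l, -, hm, rfl⟩
      have : l.prod ∈ Algebra.adjoin R (Set.range a) :=
        Subalgebra.list_prod_mem _ fun y hy => Algebra.subset_adjoin (hm y hy)
      exact this
    rw [h] at hle
    have : Subalgebra.toSubmodule (Algebra.adjoin R (Set.range a)) = ⊤ := top_le_iff.1 hle
    rwa [Algebra.toSubmodule_eq_top] at this
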